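/- Let D be a positive integer with gcd(D,6) = 1, let r ∈ ℤ, let μ ∈ {1/2, 1/6}, and let S = {s ∈ ℤ : 0 ≤ s < 6D, s ≡ 1 (mod 6)}. Then for every z ∈ ℂ with Im z > 0: ∑_{n∈ℤ} (−1)ⁿ · exp(πi(n − Dμ)² · 3z) · exp(2πinr/D) = − ∑_{s ∈ S} θ_{s,μ}(3D²z) · exp(2πisr/D). -/

import Mathlib

open Complex

/-- For a fixed positive integer `D`, `r ∈ ℤ`, `μ ∈ ℝ`:
`θ_{r,μ}(z) = ∑_{n∈ℤ} (−1)ⁿ exp(πi(n + r/D − μ)²z)`. -/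
noncomputable def thetaRMu (D : ℕ) (r : ℤ) (μ : ℝ) (z : ℂ) : ℂ :=
  ∑' n : ℤ, (-1 : ℂ) ^ n *
    Complex.exp (Real.pi * Complex.I * ((n : ℂ) + (r : ℂ) / (D : ℂ) - (μ : ℂ)) ^ 2 * z)

private lemma neg_one_zpow_congr' {a b : ℤ} (h : a % 2 = b % 2) :
    (-1 : ℂ) ^ a = (-1 : ℂ) ^ b := by
  obtain ⟨k, hk⟩ : ∃ k, a = b + 2 * k := ⟨(a - b) / 2, by omega⟩
  subst hk
  rw [zpow_add₀ (by norm_num : (-1:ℂ) ≠ 0), zpow_mul]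
  norm_num

private lemma summable_theta_aux (D : ℕ) (hD : 0 < D) (r : ℤ) (μ : ℝ) (z : ℂ)
    (hz : 0 < z.im) :
    Summable (fun n : ℤ => (-1 : ℂ) ^ n *
        Complex.exp (Real.pi * Complex.I * ((n : ℂ) - (D : ℂ) * (μ : ℂ)) ^ 2 * (3 * z)) *
        Complex.exp (2 * Real.pi * Complex.I * (n : ℂ) * (r : ℂ) / (D : ℂ))) := by
  have h3 : 0 < (3 * z).im := by
    simpa using mul_pos (by norm_num : (0:ℝ) < 3) hz
  have h := ((summable_jacobiTheta₂_term_iff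
      (1/2 + (r:ℂ)/(D:ℂ) - 3*(D:ℂ)*(μ:ℝ)*z) (3*z)).2 h3).mul_left
      (Complex.exp (Real.pi * Complex.I * ((D:ℂ)*(μ:ℝ))^2 * (3*z)))
  refine h.congr fun n => ?_
  simp only [jacobiTheta₂_term]
  rw [show ((-1:ℂ)^n) = Complex.exp ((n:ℂ) * (Real.pi * Complex.I)) by
    rw [Complex.exp_int_mul, Complex.exp_pi_mul_I]]
  rw [← Complex.exp_add, ← Complex.exp_add, ← Complex.exp_add]
  congr 1
  have hD0 : (D:ℂ) ≠ 0 := Nat.cast_ne_zero.2 hD.ne'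
  field_simp
  ring

/-- For `gcd(D,6) = 1`, `r ∈ ℤ`, `μ ∈ {1/2, 1/6}` and `Im z > 0`:
`∑_{n∈ℤ} (−1)ⁿ exp(πi(n − Dμ)²·3z) exp(2πinr/D)
   = − ∑_{s ∈ S} θ_{s,μ}(3D²z) exp(2πisr/D)`,
where `S = {0 ≤ s < 6D : s ≡ 1 (mod 6)}`. -/
theorem theta_sup_expansion (D : ℕ) (hD : 0 < D) (hD6 : Nat.gcd D 6 = 1)
    (r : ℤ) (μ : ℝ) (hμ : μ = 1/2 ∨ μ = 1/6) (z : ℂ) (hz : 0 < z.im) :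
    ∑' n : ℤ, (-1 : ℂ) ^ n *
        Complex.exp (Real.pi * Complex.I * ((n : ℂ) - (D : ℂ) * (μ : ℂ)) ^ 2 * (3 * z)) *
        Complex.exp (2 * Real.pi * Complex.I * (n : ℂ) * (r : ℂ) / (D : ℂ))
      = -∑ s ∈ (Finset.range (6 * D)).filter (fun s => s % 6 = 1),
          thetaRMu D (s : ℤ) μ (3 * (D : ℂ) ^ 2 * z) *
            Complex.exp (2 * Real.pi * Complex.I * (s : ℂ) * (r : ℂ) / (D : ℂ)) := by
  classical
  have hD0 : (D:ℂ) ≠ 0 := Nat.cast_ne_zero.2 hD.ne'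
  have hDodd : D % 2 = 1 := by
    rcases Nat.even_or_odd D with h | h
    · exfalso
      obtain ⟨k, hk⟩ := h
      have : 2 ∣ Nat.gcd D 6 := Nat.dvd_gcd ⟨k, by omega⟩ ⟨3, rfl⟩
      rw [hD6] at this
      omega
    · obtain ⟨k, hk⟩ := h; omega
  -- Bezout
  obtain ⟨u, v, huv⟩ : ∃ u v : ℤ, 6*u + (D:ℤ)*v = 1 := by
    have hc : IsCoprime (6:ℤ) (D:ℤ) := by
      rw [Int.isCoprime_iff_gcd_eq_one]
      have : Nat.gcd 6 D = 1 := by rw [Nat.gcd_comm]; exact hD6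
      simpa [Int.gcd] using this
    obtain ⟨a, b, hab⟩ := hc
    exact ⟨a, b, by linarith⟩
  set g : ℤ → ℤ := fun n => (6*u*n + (D:ℤ)*v) % (6*(D:ℤ)) with hg
  have h6D : (0:ℤ) < 6*(D:ℤ) := by positivity
  have hg_nonneg : ∀ n, 0 ≤ g n := fun n => Int.emod_nonneg _ (by omega)
  have hg_lt : ∀ n, g n < 6*(D:ℤ) := fun n => Int.emod_lt_of_pos _ h6D
  have hg_mod6 : ∀ n, g n % 6 = 1 := by
    intro n
    have h1 : g n % 6 = (6*u*n + (D:ℤ)*v) % 6 :=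
      Int.emod_emod_of_dvd _ ⟨(D:ℤ), rfl⟩
    have key : 6*u*n + (D:ℤ)*v = 1 + 6*(u*n - u) := by linear_combination huv
    rw [h1, key, Int.add_mul_emod_self_left]; norm_num
  have hg_modD : ∀ n, g n % (D:ℤ) = n % (D:ℤ) := by
    intro n
    have h1 : g n % (D:ℤ) = (6*u*n + (D:ℤ)*v) % (D:ℤ) :=
      Int.emod_emod_of_dvd _ ⟨6, by ring⟩
    have key : 6*u*n + (D:ℤ)*v = n + (D:ℤ)*(v - v*n) := by linear_combination n * huv
    rw [h1, key, Int.add_mul_emod_self_left]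
  have hg_uniq : ∀ (n t : ℤ), 0 ≤ t → t < 6*(D:ℤ) → t % 6 = 1 → t % (D:ℤ) = n % (D:ℤ) →
      t = g n := by
    intro n t h0 h1 h2 h3
    have hm6 : t ≡ g n [ZMOD 6] := by
      show t % 6 = g n % 6
      rw [h2, hg_mod6 n]
    have hmD : t ≡ g n [ZMOD (D:ℤ)] := by
      show t % (D:ℤ) = g n % (D:ℤ)
      rw [h3, hg_modD n]
    have hcop : Int.gcd 6 (D:ℤ) = 1 := by
      have : Nat.gcd 6 D = 1 := by rw [Nat.gcd_comm]; exact hD6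
      simpa [Int.gcd] using this
    have hmod : t ≡ g n [ZMOD 6*(D:ℤ)] :=
      (Int.modEq_and_modEq_iff_modEq_mul hcop).1 ⟨hm6, hmD⟩
    have h4 : t % (6*(D:ℤ)) = g n % (6*(D:ℤ)) := hmod
    rw [Int.emod_eq_of_lt h0 h1, Int.emod_eq_of_lt (hg_nonneg n) (hg_lt n)] at h4
    exact h4
  set Sf := (Finset.range (6 * D)).filter (fun s => s % 6 = 1) with hSfdef
  have memSf : ∀ n : ℤ, (g n).toNat ∈ Sf := by
    intro n
    have h0 := hg_nonneg n; have h1 := hg_lt n; have h2 := hg_mod6 n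
    simp only [hSfdef, Finset.mem_filter, Finset.mem_range]
    omega
  let E : {s // s ∈ Sf} × ℤ ≃ ℤ :=
    { toFun := fun p => p.2 * (D:ℤ) + ((p.1 : ℕ) : ℤ)
      invFun := fun n => (⟨(g n).toNat, memSf n⟩, (n - g n) / (D:ℤ))
      left_inv := by
        rintro ⟨⟨s, hs⟩, m⟩
        simp only [hSfdef, Finset.mem_filter, Finset.mem_range] at hs
        have hgn : g (m*(D:ℤ) + (s:ℤ)) = (s:ℤ) := by
          refine (hg_uniq _ _ (by omega) (by push_cast; omega) (by omega) ?_).symm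
          rw [show m*(D:ℤ) + (s:ℤ) = (s:ℤ) + (D:ℤ)*m by ring, Int.add_mul_emod_self_left]
        have hDz : (D:ℤ) ≠ 0 := by omega
        refine Prod.ext (Subtype.ext ?_) ?_
        · simp only [hgn]; omega
        · simp only [hgn]
          rw [show m*(D:ℤ) + (s:ℤ) - (s:ℤ) = m * (D:ℤ) by ring,
            Int.mul_ediv_cancel _ hDz]
      right_inv := by
        intro n
        have hdvd : (D:ℤ) ∣ n - g n := by
          have h1 := hg_modD n
          refine Int.dvd_of_emod_eq_zero ?_
          rw [Int.sub_emod, h1, sub_self, Int.zero_emod]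
        have h2 : ((n - g n) / (D:ℤ)) * (D:ℤ) = n - g n := Int.ediv_mul_cancel hdvd
        have h0 := hg_nonneg n
        show ((n - g n) / (D:ℤ)) * (D:ℤ) + (((g n).toNat : ℕ) : ℤ) = n
        rw [h2, Int.toNat_of_nonneg h0]
        ring }
  set F : ℤ → ℂ := fun n => (-1 : ℂ) ^ n *
      Complex.exp (Real.pi * Complex.I * ((n : ℂ) - (D : ℂ) * (μ : ℂ)) ^ 2 * (3 * z)) *
      Complex.exp (2 * Real.pi * Complex.I * (n : ℂ) * (r : ℂ) / (D : ℂ)) with hF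
  have hf : Summable F := summable_theta_aux D hD r μ z hz
  have key : ∀ s : ℕ, s ∈ Sf →
      (∑' m : ℤ, F (m * (D:ℤ) + (s:ℤ)))
        = -(thetaRMu D (s : ℤ) μ (3 * (D : ℂ) ^ 2 * z) *
            Complex.exp (2 * Real.pi * Complex.I * (s : ℂ) * (r : ℂ) / (D : ℂ))) := by
    intro s hs
    simp only [hSfdef, Finset.mem_filter, Finset.mem_range] at hs
    rw [thetaRMu, ← tsum_mul_right, ← tsum_neg]
    refine tsum_congr fun m => ?_
    have hsign : (-1:ℂ) ^ (m*(D:ℤ)+(s:ℤ)) = -((-1:ℂ)^m) := by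
      have hmod : (m*(D:ℤ)+(s:ℤ)) % 2 = (m+1) % 2 := by
        have hD2 : (D:ℤ) ≡ 1 [ZMOD 2] := by
          show (D:ℤ) % 2 = 1 % 2; omega
        have h1 : m*(D:ℤ) ≡ m*1 [ZMOD 2] := hD2.mul_left m
        have h2 : (s:ℤ) ≡ 1 [ZMOD 2] := by
          show (s:ℤ) % 2 = 1 % 2; omega
        simpa [Int.ModEq] using h1.add h2
      rw [neg_one_zpow_congr' hmod, zpow_add₀ (by norm_num : (-1:ℂ) ≠ 0), zpow_one]
      ring
    have hexp1 : Complex.exp (Real.pi * Complex.I *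
          (((m*(D:ℤ)+(s:ℤ) : ℤ) : ℂ) - (D:ℂ) * (μ:ℂ))^2 * (3*z))
        = Complex.exp (Real.pi * Complex.I *
          ((m:ℂ) + (((s:ℤ) : ℤ):ℂ)/(D:ℂ) - (μ:ℂ))^2 * (3*(D:ℂ)^2*z)) := by
      congr 1
      push_cast
      field_simp
    have hexp2 : Complex.exp (2 * Real.pi * Complex.I *
          ((m*(D:ℤ)+(s:ℤ) : ℤ) : ℂ) * (r:ℂ) / (D:ℂ))
        = Complex.exp (2 * Real.pi * Complex.I * (s:ℂ) * (r:ℂ) / (D:ℂ)) := by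
      rw [show (2 * (Real.pi:ℂ) * Complex.I * ((m*(D:ℤ)+(s:ℤ) : ℤ) : ℂ) * (r:ℂ) / (D:ℂ))
          = ((m*r : ℤ):ℂ) * (2 * Real.pi * Complex.I)
            + 2 * Real.pi * Complex.I * (s:ℂ) * (r:ℂ) / (D:ℂ) by
        push_cast; field_simp]
      rw [Complex.exp_add, Complex.exp_int_mul_two_pi_mul_I, one_mul]
    simp only [hF]
    rw [hsign, hexp1, hexp2]
    push_cast
    ring
  have hfE : Summable (F ∘ E) := E.summable_iff.2 hf
  have step : ∑' n : ℤ, F n = ∑ s ∈ Sf, ∑' m : ℤ, F (m * (D:ℤ) + (s:ℤ)) := by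
    rw [← E.tsum_eq F]
    rw [show (fun p : {s // s ∈ Sf} × ℤ => F (E p)) = F ∘ E from rfl] at *
    rw [Summable.tsum_prod' hfE (fun b => hfE.comp_injective (fun c₁ c₂ h => by
      simpa using congrArg Prod.snd h))]
    rw [tsum_fintype]
    exact Finset.sum_coe_sort Sf (fun s => ∑' m : ℤ, F (m * (D:ℤ) + (s:ℤ)))
  calc ∑' n : ℤ, F n = ∑ s ∈ Sf, ∑' m : ℤ, F (m * (D:ℤ) + (s:ℤ)) := step
    _ = ∑ s ∈ Sf, -(thetaRMu D (s : ℤ) μ (3 * (D : ℂ) ^ 2 * z) *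
          Complex.exp (2 * Real.pi * Complex.I * (s : ℂ) * (r : ℂ) / (D : ℂ))) :=
        Finset.sum_congr rfl key
    _ = -∑ s ∈ Sf, thetaRMu D (s : ℤ) μ (3 * (D : ℂ) ^ 2 * z) *
          Complex.exp (2 * Real.pi * Complex.I * (s : ℂ) * (r : ℂ) / (D : ℂ)) := by
        rw [Finset.sum_neg_distrib]
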